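/- arXiv:1204.2848 — 3 statements merged into one kernel-verified Lean document; each statement's English description precedes it below -/
import Mathlib

section
/- Let ω : [0,∞) → [0,∞) be continuous and non-decreasing with ω(0) = 0, and suppose ω(t) ≥ k·t for all t ≥ 0, for some k > 0. Let W be an open set in ℝ^{N-1}, M > 0, and let g : closure(W) → ℝ satisfy |g(x̄) - g(ȳ)| ≤ M·ω(|x̄ - ȳ|) for all x̄, ȳ ∈ closure(W). Then for all x̄ ∈ closure(W) and x_N ∈ ℝ, |g(x̄) - x_N| ≤ (M + 1/k)·ω(d((x̄, x_N), Graph(g))), where Graph(g) = {(ȳ, g(ȳ)) : ȳ ∈ closure(W)} and d denotes Euclidean distance in ℝ^N. -/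
open Metric Set

lemma dist_fst_le_L2 {α β : Type*} [SeminormedAddCommGroup α] [SeminormedAddCommGroup β]
    (x y : WithLp 2 (α × β)) : dist x.fst y.fst ≤ dist x y := by
  rw [WithLp.prod_dist_eq_of_L2]
  calc dist x.fst y.fst = √(dist x.fst y.fst ^ 2) := by
        rw [Real.sqrt_sq dist_nonneg]
    _ ≤ _ := Real.sqrt_le_sqrt (by nlinarith [sq_nonneg (dist x.snd y.snd)])

lemma dist_snd_le_L2 {α β : Type*} [SeminormedAddCommGroup α] [SeminormedAddCommGroup β]
    (x y : WithLp 2 (α × β)) : dist x.snd y.snd ≤ dist x y := by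
  rw [WithLp.prod_dist_eq_of_L2]
  calc dist x.snd y.snd = √(dist x.snd y.snd ^ 2) := by
        rw [Real.sqrt_sq dist_nonneg]
    _ ≤ _ := Real.sqrt_le_sqrt (by nlinarith [sq_nonneg (dist x.fst y.fst)])

/-- If `g` satisfies `|g(x̄) − g(ȳ)| ≤ M ω(|x̄ − ȳ|)` on `closure W` and `ω(t) ≥ kt`,
then the vertical deviation `|g(x̄) − x_N|` is controlled by
`(M + 1/k) ω(d((x̄,x_N), Graph(g)))`, the distance in `ℝ^N = ℝ^{N−1} × ℝ` (with the
Euclidean, i.e. `L²`, product metric) to the graph of `g`. -/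
theorem vertical_dist_le_of_modulus {n : ℕ}
    (ω : ℝ → ℝ) (k M : ℝ) (hk : 0 < k) (hM : 0 < M)
    (hωc : ContinuousOn ω (Ici 0)) (hωm : MonotoneOn ω (Ici 0)) (hω0 : ω 0 = 0)
    (hωk : ∀ t ≥ (0:ℝ), k * t ≤ ω t)
    (W : Set (EuclideanSpace ℝ (Fin n))) (hW : IsOpen W)
    (g : EuclideanSpace ℝ (Fin n) → ℝ)
    (hg : ∀ x ∈ closure W, ∀ y ∈ closure W, |g x - g y| ≤ M * ω (dist x y)) :
    ∀ x ∈ closure W, ∀ xN : ℝ,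
      |g x - xN| ≤ (M + 1 / k) *
        ω (infDist ((WithLp.equiv 2 (EuclideanSpace ℝ (Fin n) × ℝ)).symm (x, xN))
            ((fun y => (WithLp.equiv 2 (EuclideanSpace ℝ (Fin n) × ℝ)).symm (y, g y)) ''
              closure W)) := by
  intro x hx xN
  set p := (WithLp.equiv 2 (EuclideanSpace ℝ (Fin n) × ℝ)).symm (x, xN) with hp
  set S := ((fun y => (WithLp.equiv 2 (EuclideanSpace ℝ (Fin n) × ℝ)).symm (y, g y)) ''
      closure W) with hS
  have hSne : S.Nonempty := ⟨_, ⟨x, hx, rfl⟩⟩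
  set d := infDist p S with hd
  have hd0 : 0 ≤ d := infDist_nonneg
  -- key pointwise estimate
  have key : ∀ y ∈ closure W, |g x - xN| ≤ (M + 1 / k) *
      ω (dist p ((WithLp.equiv 2 (EuclideanSpace ℝ (Fin n) × ℝ)).symm (y, g y))) := by
    intro y hy
    set q := (WithLp.equiv 2 (EuclideanSpace ℝ (Fin n) × ℝ)).symm (y, g y) with hq
    have h1 : dist x y ≤ dist p q := by
      simpa [hp, hq, WithLp.toLp_fst] using dist_fst_le_L2 p q
    have h2 : |xN - g y| ≤ dist p q := by
      have := dist_snd_le_L2 p q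
      simpa [hp, hq, WithLp.toLp_snd, Real.dist_eq] using this
    have hdq : (0:ℝ) ≤ dist p q := dist_nonneg
    have hmono : ω (dist x y) ≤ ω (dist p q) := hωm dist_nonneg hdq h1
    have hMk : |xN - g y| ≤ (1 / k) * ω (dist p q) := by
      have hk' := hωk (dist p q) hdq
      calc |xN - g y| ≤ dist p q := h2
        _ ≤ ω (dist p q) / k := by rw [le_div_iff₀ hk]; linarith
        _ = 1 / k * ω (dist p q) := by ring
    calc |g x - xN| ≤ |g x - g y| + |xN - g y| := by
          rw [abs_sub_comm xN]; exact abs_sub_le _ _ _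
      _ ≤ M * ω (dist x y) + (1 / k) * ω (dist p q) := add_le_add (hg x hx y hy) hMk
      _ ≤ M * ω (dist p q) + (1 / k) * ω (dist p q) := by
          have := mul_le_mul_of_nonneg_left hmono hM.le; linarith
      _ = (M + 1 / k) * ω (dist p q) := by ring
  -- now the limit argument
  have heps : ∀ ε > (0:ℝ), |g x - xN| ≤ (M + 1 / k) * ω (d + ε) := by
    intro ε hε
    obtain ⟨q, hqS, hqd⟩ := (infDist_lt_iff hSne).1 (by linarith : d < d + ε)
    obtain ⟨y, hy, rfl⟩ := hqS
    have := key y hy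
    have hmono : ω (dist p _) ≤ ω (d + ε) := hωm dist_nonneg (by simp only [mem_Ici]; linarith) hqd.le
    have hMk0 : (0:ℝ) ≤ M + 1 / k := by positivity
    exact this.trans (mul_le_mul_of_nonneg_left hmono hMk0)
  -- pass to the limit ε → 0⁺
  have hcont : Filter.Tendsto (fun ε => (M + 1 / k) * ω (d + ε))
      (nhdsWithin 0 (Ioi 0)) (nhds ((M + 1 / k) * ω d)) := by
    have h1 : Filter.Tendsto (fun ε : ℝ => d + ε) (nhdsWithin 0 (Ioi 0))
        (nhdsWithin d (Ici 0)) := by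
      apply tendsto_nhdsWithin_of_tendsto_nhds_of_eventually_within
      · have : Filter.Tendsto (fun ε : ℝ => d + ε) (nhds 0) (nhds d) :=
          Continuous.tendsto' (by continuity) 0 d (by simp)
        exact this.mono_left nhdsWithin_le_nhds
      · exact Filter.eventually_of_mem self_mem_nhdsWithin
          fun ε hε => mem_Ici.2 (by have : (0:ℝ) < ε := hε; linarith)
    exact (Filter.Tendsto.const_mul _ ((hωc d (by exact hd0)).tendsto.comp h1))
  exact ge_of_tendsto hcont (Filter.eventually_of_mem self_mem_nhdsWithin heps)
end

section
/- In ℝ², let c > √3, 0 < ε < 1/√3, and let Ω₁ = {(x₁,x₂) : c|x₂| < x₁ < c} and Ω₂ = (Ω₁)_ε = {x ∈ Ω₁ : d(x,∂Ω₁) > ε}. Then sup_{x∈∂Ω₂} d(x,∂Ω₁) = ε while d^{HP}(∂Ω₁,∂Ω₂) = ε·√(c²+1); hence the lower Hausdorff–Pompeiu deviation of the boundaries equals ε, which is strictly smaller than the Hausdorff–Pompeiu distance ε√(c²+1) of the boundaries. -/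
open Metric Set Filter

namespace SectorAux

/-- Points of the plane. -/
def mk2 (a b : ℝ) : EuclideanSpace ℝ (Fin 2) := WithLp.toLp 2 ![a, b]

@[simp] lemma mk2_zero (a b : ℝ) : mk2 a b 0 = a := rfl
@[simp] lemma mk2_one (a b : ℝ) : mk2 a b 1 = b := rfl

lemma dist_eq2 (x y : EuclideanSpace ℝ (Fin 2)) :
    dist x y = Real.sqrt ((x 0 - y 0) ^ 2 + (x 1 - y 1) ^ 2) := by
  rw [EuclideanSpace.dist_eq, Fin.sum_univ_two]; simp [Real.dist_eq, sq_abs]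

lemma abs_sub_le_dist2 (x y : EuclideanSpace ℝ (Fin 2)) : |x 0 - y 0| ≤ dist x y := by
  rw [dist_eq2, ← Real.sqrt_sq_eq_abs]
  exact Real.sqrt_le_sqrt (by nlinarith [sq_nonneg (x 1 - y 1)])

lemma cauchy_schwarz2 (a b u v : ℝ) :
    a * u + b * v ≤ Real.sqrt (a ^ 2 + b ^ 2) * Real.sqrt (u ^ 2 + v ^ 2) := by
  rw [← Real.sqrt_mul (by positivity)]
  calc a * u + b * v ≤ |a * u + b * v| := le_abs_self _
    _ = Real.sqrt ((a * u + b * v) ^ 2) := (Real.sqrt_sq_eq_abs _).symm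
    _ ≤ Real.sqrt ((a ^ 2 + b ^ 2) * (u ^ 2 + v ^ 2)) :=
        Real.sqrt_le_sqrt (by nlinarith [sq_nonneg (a * v - b * u)])

/-- Open sector-trapezoid. -/
def O (c a b : ℝ) : Set (EuclideanSpace ℝ (Fin 2)) := {x | c * |x 1| + a < x 0 ∧ x 0 < b}

/-- Its closure. -/
def T (c a b : ℝ) : Set (EuclideanSpace ℝ (Fin 2)) := {x | c * |x 1| + a ≤ x 0 ∧ x 0 ≤ b}

lemma isOpen_O (c a b : ℝ) : IsOpen (O c a b) := by
  have h0 : Continuous fun x : EuclideanSpace ℝ (Fin 2) => x 0 := by fun_prop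
  have h1 : Continuous fun x : EuclideanSpace ℝ (Fin 2) => x 1 := by fun_prop
  exact (isOpen_lt (by continuity) h0).inter (isOpen_lt h0 continuous_const)

lemma isClosed_T (c a b : ℝ) : IsClosed (T c a b) := by
  have h0 : Continuous fun x : EuclideanSpace ℝ (Fin 2) => x 0 := by fun_prop
  have h1 : Continuous fun x : EuclideanSpace ℝ (Fin 2) => x 1 := by fun_prop
  exact (isClosed_le (by continuity) h0).inter (isClosed_le h0 continuous_const)

lemma O_subset_T (c a b : ℝ) : O c a b ⊆ T c a b := fun x hx => ⟨hx.1.le, hx.2.le⟩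

lemma T_subset_closure_O (c a b : ℝ) (hc : 0 ≤ c) (hab : a < b) :
    T c a b ⊆ closure (O c a b) := by
  intro p hp
  set z : EuclideanSpace ℝ (Fin 2) := mk2 ((a + b) / 2) 0 with hz
  set u : ℕ → EuclideanSpace ℝ (Fin 2) := fun n => p + ((1 : ℝ) / (n + 1)) • (z - p) with hu
  have htend : Tendsto u atTop (nhds p) := by
    have h1 : Tendsto (fun n : ℕ => (1 : ℝ) / (n + 1)) atTop (nhds 0) :=
      tendsto_one_div_add_atTop_nhds_zero_nat
    have h2 : Tendsto (fun n : ℕ => p + ((1 : ℝ) / (n + 1)) • (z - p)) atTop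
        (nhds (p + (0 : ℝ) • (z - p))) :=
      tendsto_const_nhds.add (h1.smul_const (z - p))
    simpa [hu, one_div] using h2
  refine mem_closure_of_tendsto htend (Eventually.of_forall fun n => ?_)
  set t : ℝ := (1 : ℝ) / (n + 1) with ht
  have ht0 : 0 < t := by positivity
  have ht1 : t ≤ 1 := by
    rw [ht, div_le_one (by positivity)]
    have : (1:ℝ) ≤ (n : ℝ) + 1 := by exact_mod_cast Nat.one_le_iff_ne_zero.mpr (Nat.succ_ne_zero n)
    linarith
  have hu0 : u n 0 = p 0 + t * ((a + b) / 2 - p 0) := by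
    simp [hu, ht, PiLp.add_apply, PiLp.smul_apply, PiLp.sub_apply, smul_eq_mul, hz, one_div]
  have hu1 : u n 1 = (1 - t) * p 1 := by
    simp [hu, ht, PiLp.add_apply, PiLp.smul_apply, PiLp.sub_apply, smul_eq_mul, hz, one_div]
    ring
  have habs : |u n 1| = (1 - t) * |p 1| := by
    rw [hu1, abs_mul, abs_of_nonneg (by linarith)]
  constructor
  · rw [hu0, habs]
    have h1 : c * |p 1| ≤ p 0 - a := by linarith [hp.1]
    have h2 : (1 - t) * (c * |p 1|) ≤ (1 - t) * (p 0 - a) :=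
      mul_le_mul_of_nonneg_left h1 (by linarith)
    nlinarith
  · rw [hu0]
    have h2 : p 0 ≤ b := hp.2
    nlinarith
end SectorAux

namespace SectorAux

lemma closure_O (c a b : ℝ) (hc : 0 ≤ c) (hab : a < b) :
    closure (O c a b) = T c a b :=
  subset_antisymm (closure_minimal (O_subset_T c a b) (isClosed_T c a b))
    (T_subset_closure_O c a b hc hab)

lemma frontier_O (c a b : ℝ) (hc : 0 ≤ c) (hab : a < b) :
    frontier (O c a b) = T c a b \ O c a b := by
  rw [frontier, closure_O c a b hc hab, (isOpen_O c a b).interior_eq]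

end SectorAux
open Metric Set Filter SectorAux in
set_option maxHeartbeats 2000000 in
/-- The example of a sector `Ω₁ = {(x₁,x₂) : c|x₂| < x₁ < c}` in `ℝ²` with
`Ω₂ = (Ω₁)_ε`: the lower Hausdorff–Pompeiu deviation of the boundaries equals `ε`,
the Hausdorff–Pompeiu distance of the boundaries equals `ε√(c²+1)`, and the former
is strictly smaller than the latter. -/
theorem sector_example (c ε : ℝ) (hc : Real.sqrt 3 < c)
    (hε0 : 0 < ε) (hε : ε < 1 / Real.sqrt 3) :
    ∀ Ω₁ Ω₂ : Set (EuclideanSpace ℝ (Fin 2)),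
      Ω₁ = {x | c * |x 1| < x 0 ∧ x 0 < c} →
      Ω₂ = {x ∈ Ω₁ | ε < infDist x (frontier Ω₁)} →
      (⨆ x : frontier Ω₂, infDist (x : EuclideanSpace ℝ (Fin 2)) (frontier Ω₁)) = ε ∧
      max (⨆ x : frontier Ω₁, infDist (x : EuclideanSpace ℝ (Fin 2)) (frontier Ω₂))
          (⨆ x : frontier Ω₂, infDist (x : EuclideanSpace ℝ (Fin 2)) (frontier Ω₁))
        = ε * Real.sqrt (c ^ 2 + 1) ∧
      min (⨆ x : frontier Ω₁, infDist (x : EuclideanSpace ℝ (Fin 2)) (frontier Ω₂))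
          (⨆ x : frontier Ω₂, infDist (x : EuclideanSpace ℝ (Fin 2)) (frontier Ω₁))
        = ε ∧
      ε < ε * Real.sqrt (c ^ 2 + 1) := by
  intro Ω₁ Ω₂ h1 h2
  set s := Real.sqrt (c ^ 2 + 1) with hsdef
  have h3 : Real.sqrt 3 ^ 2 = 3 := Real.sq_sqrt (by norm_num)
  have hsqrt3 : (0:ℝ) < Real.sqrt 3 := Real.sqrt_pos.2 (by norm_num)
  have hc0 : 0 < c := lt_trans hsqrt3 hc
  have hc2 : 3 < c ^ 2 := by nlinarith
  have hs2 : s ^ 2 = c ^ 2 + 1 := Real.sq_sqrt (by positivity)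
  have hs0 : 0 < s := Real.sqrt_pos.2 (by positivity)
  have hs1 : 1 < s := by nlinarith
  have hsc : s < c ^ 2 - 1 := by nlinarith
  have hsum : 1 + s < Real.sqrt 3 * c := by
    refine lt_of_pow_lt_pow_left₀ 2 (by positivity) ?_
    rw [mul_pow, h3]
    nlinarith
  have hkeyε : ε * (1 + s) < c := by
    have h4 : ε * (1 + s) < (1 / Real.sqrt 3) * (1 + s) :=
      mul_lt_mul_of_pos_right hε (by linarith)
    have h5 : (1 / Real.sqrt 3) * (1 + s) < (1 / Real.sqrt 3) * (Real.sqrt 3 * c) :=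
      mul_lt_mul_of_pos_left hsum (by positivity)
    have h6 : (1 / Real.sqrt 3) * (Real.sqrt 3 * c) = c := by
      field_simp
    linarith
  have hab2 : ε * s < c - ε := by nlinarith
  have hΩ₁O : Ω₁ = O c 0 c := by
    rw [h1]; ext x; simp [O]
  have hfr1 : frontier Ω₁ = T c 0 c \ O c 0 c := by
    rw [hΩ₁O, frontier_O c 0 c hc0.le hc0]
  have h0mem : mk2 0 0 ∈ frontier Ω₁ := by
    rw [hfr1]
    refine ⟨⟨by simp [T], by simp [T, hc0.le]⟩, by simp [O]⟩
  have hfne : (frontier Ω₁).Nonempty := ⟨_, h0mem⟩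
  -- the foot of the perpendicular onto the slanted sides
  have key1 : ∀ x ∈ O c 0 c, infDist x (frontier Ω₁) ≤ (x 0 - c * |x 1|) / s := by
    rintro x ⟨hx1, hx2⟩
    set σ : ℝ := if 0 ≤ x 1 then 1 else -1 with hσ
    have hσabs : σ * x 1 = |x 1| := by
      rw [hσ]; split_ifs with h
      · rw [one_mul, abs_of_nonneg h]
      · rw [abs_of_neg (lt_of_not_ge h)]; ring
    have hσsq : σ * σ = 1 := by rw [hσ]; split_ifs <;> norm_num
    have hσa : |σ| = 1 := by rw [hσ]; split_ifs <;> norm_num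
    have hxpos : 0 < x 0 - c * |x 1| := by
      simp only [O, mem_setOf_eq] at hx1; linarith
    set t : ℝ := (x 0 - c * |x 1|) / s ^ 2 with ht
    have ht0 : 0 < t := div_pos hxpos (by positivity)
    have hts : (c ^ 2 + 1) * t = x 0 - c * |x 1| := by
      rw [ht, ← hs2]; field_simp
    set p := mk2 (x 0 - t) (x 1 + σ * c * t) with hp
    have hp7 : σ * p 1 = |x 1| + c * t := by
      have : σ * (x 1 + σ * c * t) = σ * x 1 + (σ * σ) * (c * t) := by ring
      rw [hp, mk2_one, this, hσabs, hσsq, one_mul]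
    have hp1abs : |p 1| = |x 1| + c * t := by
      have hnn : 0 ≤ σ * p 1 := by
        rw [hp7]; positivity
      calc |p 1| = |σ| * |p 1| := by rw [hσa, one_mul]
        _ = |σ * p 1| := (abs_mul σ (p 1)).symm
        _ = σ * p 1 := abs_of_nonneg hnn
        _ = |x 1| + c * t := hp7
    have hpT0 : c * |p 1| + 0 = p 0 := by
      rw [hp1abs, hp, mk2_zero]
      linear_combination hts
    have hpmem : p ∈ frontier Ω₁ := by
      rw [hfr1]
      refine ⟨⟨le_of_eq hpT0, ?_⟩, fun h => ?_⟩
      · rw [hp, mk2_zero]; linarith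
      · exact lt_irrefl _ (hpT0 ▸ h.1)
    have hdist : dist x p = t * s := by
      rw [dist_eq2]
      have hco : (x 0 - p 0) ^ 2 + (x 1 - p 1) ^ 2 = (t * s) ^ 2 := by
        rw [hp, mk2_zero, mk2_one]
        linear_combination (c ^ 2 * t ^ 2) * hσsq - t ^ 2 * hs2
      rw [hco, Real.sqrt_sq (by positivity)]
    have hineq := infDist_le_dist_of_mem (x := x) hpmem
    rw [hdist] at hineq
    have : t * s = (x 0 - c * |x 1|) / s := by
      rw [ht]; field_simp
    linarith [this ▸ hineq]
  -- distance to the right wall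
  have key2 : ∀ x ∈ O c 0 c, infDist x (frontier Ω₁) ≤ c - x 0 := by
    rintro x ⟨hx1, hx2⟩
    simp only [O, mem_setOf_eq] at hx1 hx2
    have hq : mk2 c (x 1) ∈ frontier Ω₁ := by
      rw [hfr1]
      refine ⟨⟨?_, by simp⟩, fun h => ?_⟩
      · simp only [mk2_zero, mk2_one]; linarith [abs_nonneg (x 1)]
      · exact lt_irrefl c h.2
    have hineq := infDist_le_dist_of_mem (x := x) hq
    have hd : dist x (mk2 c (x 1)) = c - x 0 := by
      rw [dist_eq2]; simp only [mk2_zero, mk2_one, sub_self]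
      have : (x 0 - c) ^ 2 + 0 ^ 2 = (c - x 0) ^ 2 := by ring
      rw [this, Real.sqrt_sq (by linarith)]
    linarith [hd ▸ hineq]
  -- points deep inside are far from the boundary
  have key3 : ∀ x : EuclideanSpace ℝ (Fin 2), c * |x 1| + ε * s < x 0 → x 0 < c - ε →
      ε < infDist x (frontier Ω₁) := by
    intro x hxa hxb
    set m : ℝ := min ((x 0 - c * |x 1|) / s) (c - x 0) with hm
    have hm1 : ε < m := by
      apply lt_min
      · rw [lt_div_iff₀ hs0]; linarith
      · linarith
    by_contra hcon
    push_neg at hcon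
    obtain ⟨y, hy, hdy⟩ := (infDist_lt_iff hfne).1 (lt_of_le_of_lt hcon hm1)
    rw [hfr1] at hy
    obtain ⟨⟨hyT1, hyT2⟩, hyO⟩ := hy
    simp only [T, mem_setOf_eq] at hyT1 hyT2
    simp only [O, mem_setOf_eq, not_and, not_lt] at hyO
    rcases lt_or_ge (y 0) c with hyc | hyc
    · -- y is on a slanted side : y 0 ≤ c * |y 1|
      have hy0 : y 0 ≤ c * |y 1| := by
        by_contra hcon2
        push_neg at hcon2
        exact absurd (hyO (by linarith)) (not_le.2 hyc)
      set σ : ℝ := if 0 ≤ y 1 then 1 else -1 with hσ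
      have hσabs : σ * y 1 = |y 1| := by
        rw [hσ]; split_ifs with h
        · rw [one_mul, abs_of_nonneg h]
        · rw [abs_of_neg (lt_of_not_ge h)]; ring
      have hσsq : σ * σ = 1 := by rw [hσ]; split_ifs <;> norm_num
      have hσa : |σ| = 1 := by rw [hσ]; split_ifs <;> norm_num
      have hcs := cauchy_schwarz2 1 (-(c * σ)) (x 0 - y 0) (x 1 - y 1)
      have he : (1:ℝ) ^ 2 + (-(c * σ)) ^ 2 = c ^ 2 + 1 := by
        linear_combination c ^ 2 * hσsq
      rw [he] at hcs
      have hcs2 : 1 * (x 0 - y 0) + -(c * σ) * (x 1 - y 1) ≤ s * dist x y := by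
        rw [dist_eq2]; exact hcs
      have hσx : σ * x 1 ≤ |x 1| := by
        calc σ * x 1 ≤ |σ * x 1| := le_abs_self _
          _ = |σ| * |x 1| := abs_mul σ (x 1)
          _ = |x 1| := by rw [hσa, one_mul]
      have hcx : c * (σ * x 1) ≤ c * |x 1| := mul_le_mul_of_nonneg_left hσx hc0.le
      have hly : c * (σ * y 1) = c * |y 1| := by rw [hσabs]
      have hsm : s * m ≤ x 0 - c * |x 1| := by
        have := min_le_left ((x 0 - c * |x 1|) / s) (c - x 0)
        rw [← hm] at this
        calc s * m ≤ s * ((x 0 - c * |x 1|) / s) := mul_le_mul_of_nonneg_left this hs0.le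
          _ = x 0 - c * |x 1| := by field_simp
      have hfinal : s * m ≤ s * dist x y := by
        have : 1 * (x 0 - y 0) + -(c * σ) * (x 1 - y 1)
            = (x 0 - c * (σ * x 1)) - (y 0 - c * (σ * y 1)) := by ring
        rw [this] at hcs2
        have hy' : y 0 - c * (σ * y 1) ≤ 0 := by rw [hly]; linarith
        linarith
      have := le_of_mul_le_mul_left hfinal hs0
      linarith
    · -- y is on the right wall : y 0 = c
      have h9 := abs_sub_le_dist2 x y
      have : c - x 0 ≤ |x 0 - y 0| := by
        rw [abs_sub_comm]
        calc c - x 0 ≤ y 0 - x 0 := by linarith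
          _ ≤ |y 0 - x 0| := le_abs_self _
      have hmle : m ≤ c - x 0 := min_le_right _ _
      linarith
  -- identification of Ω₂
  have hΩ₂O : Ω₂ = O c (ε * s) (c - ε) := by
    rw [h2]; ext x
    simp only [mem_sep_iff, O, mem_setOf_eq]
    constructor
    · rintro ⟨hxΩ, hxd⟩
      rw [hΩ₁O] at hxΩ
      have k1 := key1 x hxΩ
      have k2 := key2 x hxΩ
      constructor
      · have h7 : ε < (x 0 - c * |x 1|) / s := lt_of_lt_of_le hxd k1
        rw [lt_div_iff₀ hs0] at h7; linarith
      · linarith [lt_of_lt_of_le hxd k2]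
    · rintro ⟨hxa, hxb⟩
      have hεs0 : 0 < ε * s := by positivity
      have hxΩ : x ∈ O c 0 c := ⟨by simp only [mem_setOf_eq]; linarith, by linarith⟩
      exact ⟨by rw [hΩ₁O]; exact hxΩ, key3 x (by linarith) hxb⟩
  have hfr2 : frontier Ω₂ = T c (ε * s) (c - ε) \ O c (ε * s) (c - ε) := by
    rw [hΩ₂O, frontier_O c (ε * s) (c - ε) hc0.le hab2]
  have hamem : mk2 (ε * s) 0 ∈ frontier Ω₂ := by
    rw [hfr2]
    refine ⟨⟨by simp [T], by simp [T]; linarith⟩, by simp [O]⟩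
  have hne2 : (frontier Ω₂).Nonempty := ⟨_, hamem⟩
  have hΩ₂open : IsOpen Ω₂ := by rw [hΩ₂O]; exact isOpen_O c (ε * s) (c - ε)
  -- every boundary point of Ω₂ is at distance exactly ε from ∂Ω₁
  have claimA : ∀ x ∈ frontier Ω₂, infDist x (frontier Ω₁) = ε := by
    intro x hx
    have hxcl : x ∈ closure Ω₂ := frontier_subset_closure hx
    have hge : ε ≤ infDist x (frontier Ω₁) := by
      have hsub : closure Ω₂ ⊆ {z | ε ≤ infDist z (frontier Ω₁)} := by
        apply closure_minimal ?_ (isClosed_le continuous_const (continuous_infDist_pt _))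
        rw [h2]; exact fun z hz => le_of_lt hz.2
      exact hsub hxcl
    refine le_antisymm ?_ hge
    by_contra hlt
    push_neg at hlt
    have hxT2 : x ∈ T c (ε * s) (c - ε) := by
      rw [hΩ₂O, closure_O c (ε * s) (c - ε) hc0.le hab2] at hxcl
      exact hxcl
    simp only [T, mem_setOf_eq] at hxT2
    have hεs0 : 0 < ε * s := by positivity
    have hxnotfr : x ∉ frontier Ω₁ := fun hmem => by
      have := infDist_zero_of_mem hmem; linarith
    have hxO1 : x ∈ O c 0 c := by
      by_contra hno
      exact hxnotfr (by
        rw [hfr1]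
        exact ⟨⟨by linarith [hxT2.1], by linarith [hxT2.2]⟩, hno⟩)
    have hxΩ2 : x ∈ Ω₂ := by
      rw [h2]; exact ⟨by rw [hΩ₁O]; exact hxO1, hlt⟩
    rw [hΩ₂open.frontier_eq] at hx
    exact hx.2 hxΩ2
  haveI hne2' : Nonempty (frontier Ω₂) := hne2.to_subtype
  haveI hne1' : Nonempty (frontier Ω₁) := Set.Nonempty.to_subtype hfne
  have hS2 : (⨆ x : frontier Ω₂, infDist (x : EuclideanSpace ℝ (Fin 2)) (frontier Ω₁)) = ε :=
    (iSup_congr fun x : frontier Ω₂ => claimA x x.2).trans ciSup_const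
  -- the contraction ψ mapping ∂Ω₁ to ∂Ω₂
  set l : ℝ := (c - ε - ε * s) / c with hl
  have hl0 : 0 < l := div_pos (by linarith) hc0
  have hlc : l * c = c - ε - ε * s := by rw [hl]; field_simp
  have hm0 : 0 ≤ 1 - l := by nlinarith [hlc]
  set ψ : EuclideanSpace ℝ (Fin 2) → EuclideanSpace ℝ (Fin 2) :=
    fun x => mk2 (ε * s + l * x 0) (l * x 1) with hψ
  have hψmem : ∀ x ∈ frontier Ω₁, ψ x ∈ frontier Ω₂ := by
    intro x hx
    rw [hfr1] at hx
    obtain ⟨hxT, hxO⟩ := hx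
    simp only [T, mem_setOf_eq] at hxT
    obtain ⟨hxT1, hxT2⟩ := hxT
    simp only [O, mem_setOf_eq, not_and, not_lt] at hxO
    rw [hfr2]
    have habsl : |l * x 1| = l * |x 1| := by rw [abs_mul, abs_of_nonneg hl0.le]
    refine ⟨⟨?_, ?_⟩, ?_⟩
    · simp only [mem_setOf_eq, hψ, mk2_zero, mk2_one, habsl]
      nlinarith [mul_le_mul_of_nonneg_left (show c * |x 1| ≤ x 0 by linarith) hl0.le]
    · simp only [mem_setOf_eq, hψ, mk2_zero]
      nlinarith [mul_le_mul_of_nonneg_left hxT2 hl0.le]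
    · simp only [O, mem_setOf_eq, not_and, not_lt, hψ, mk2_zero, mk2_one, habsl]
      intro hcon
      rcases le_or_gt (x 0) (c * |x 1|) with h | h
      · exfalso; nlinarith [hcon]
      · have hx0c : x 0 = c := le_antisymm hxT2 (hxO (by linarith))
        rw [hx0c]
        nlinarith [hlc]
  -- distance contraction estimate
  have hψdist : ∀ x ∈ T c 0 c, dist x (ψ x) ≤ ε * s := by
    rintro x ⟨hxT1, hxT2⟩
    simp only [T, mem_setOf_eq] at hxT1 hxT2
    have hx00 : 0 ≤ x 0 := le_trans (by positivity) (by linarith [hxT1] : c * |x 1| ≤ x 0)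
    have e0 : c * |x 1| ≤ x 0 := by linarith
    have h1' : c ^ 2 * (x 1) ^ 2 ≤ (x 0) ^ 2 := by
      have := mul_le_mul e0 e0 (by positivity) hx00
      nlinarith [sq_abs (x 1)]
    have hmc : (1 - l) * c = ε + ε * s := by
      have hx : (1 - l) * c = c - l * c := by ring
      rw [hx, hlc]; ring
    have hkey : (1 - l) * s * x 0 ≤ 2 * c ^ 2 * ε := by
      have e1 : (1 - l) * s * x 0 ≤ (1 - l) * s * c :=
        mul_le_mul_of_nonneg_left hxT2 (by positivity)
      have e2 : (1 - l) * s * c = ε * s + ε * s ^ 2 := by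
        linear_combination s * hmc
      nlinarith [hsc, hs2, hε0.le]
    have F1 : (1 - l) ^ 2 * (c ^ 2 * (x 1) ^ 2) ≤ (1 - l) ^ 2 * (x 0) ^ 2 :=
      mul_le_mul_of_nonneg_left h1' (sq_nonneg _)
    have F2 : 0 ≤ ((1 - l) * x 0) * (s * (2 * c ^ 2 * ε - (1 - l) * s * x 0)) :=
      mul_nonneg (mul_nonneg hm0 hx00) (mul_nonneg hs0.le (by linarith))
    have F3 : (1 - l) ^ 2 * (x 0) ^ 2 * s ^ 2 = (1 - l) ^ 2 * (x 0) ^ 2 * (c ^ 2 + 1) := by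
      rw [hs2]
    have main : ((1 - l) * x 0 - ε * s) ^ 2 + (1 - l) ^ 2 * (x 1) ^ 2 ≤ (ε * s) ^ 2 := by
      nlinarith [F1, F2, F3, pow_pos hc0 2]
    rw [dist_eq2]
    have hco : (x 0 - ψ x 0) ^ 2 + (x 1 - ψ x 1) ^ 2
        = ((1 - l) * x 0 - ε * s) ^ 2 + (1 - l) ^ 2 * (x 1) ^ 2 := by
      simp only [hψ, mk2_zero, mk2_one]; ring
    rw [hco]
    calc Real.sqrt (((1 - l) * x 0 - ε * s) ^ 2 + (1 - l) ^ 2 * (x 1) ^ 2)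
        ≤ Real.sqrt ((ε * s) ^ 2) := Real.sqrt_le_sqrt main
      _ = ε * s := Real.sqrt_sq (by positivity)
  have hboundS1 : ∀ x ∈ frontier Ω₁, infDist x (frontier Ω₂) ≤ ε * s := by
    intro x hx
    refine le_trans (infDist_le_dist_of_mem (hψmem x hx)) (hψdist x ?_)
    rw [hfr1] at hx; exact hx.1
  have hlow : ε * s ≤ infDist (mk2 0 0) (frontier Ω₂) := by
    by_contra hcon
    push_neg at hcon
    obtain ⟨y, hy, hdy⟩ := (infDist_lt_iff hne2).1 hcon
    rw [hfr2] at hy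
    have hy1 : c * |y 1| + ε * s ≤ y 0 := hy.1.1
    have h8 : ε * s ≤ y 0 := by nlinarith [abs_nonneg (y 1), hc0.le]
    have h9 := abs_sub_le_dist2 (mk2 0 0) y
    rw [mk2_zero] at h9
    have h10 : y 0 ≤ |0 - y 0| := by
      rw [abs_sub_comm, sub_zero]; exact le_abs_self _
    linarith
  have hS1 : (⨆ x : frontier Ω₁, infDist (x : EuclideanSpace ℝ (Fin 2)) (frontier Ω₂))
      = ε * s := by
    apply le_antisymm
    · exact ciSup_le fun x => hboundS1 x x.2
    · refine le_ciSup_of_le ⟨ε * s, ?_⟩ (⟨_, h0mem⟩ : frontier Ω₁) hlow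
      rintro v ⟨x, rfl⟩
      exact hboundS1 x x.2
  have hεεs : ε ≤ ε * s := by nlinarith
  refine ⟨hS2, ?_, ?_, ?_⟩
  · rw [hS1, hS2]; exact max_eq_left hεεs
  · rw [hS1, hS2]; exact min_eq_right hεεs
  · nlinarith
end

section
/- Fix an atlas 𝒜 in ℝ^N. The metric space (C(𝒜), d_𝒜) is complete. Moreover, for any continuous non-decreasing ω : [0,∞) → [0,∞) with ω(0) = 0 and ω(t) ≥ kt on [0,1] for some k > 0, and any M > 0, the subset C_M^{ω(·)}(𝒜) of open sets whose local boundary functions g_j satisfy |g_j(x̄) − g_j(ȳ)| ≤ M ω(|x̄ − ȳ|) for all x̄, ȳ, is compact in (C(𝒜), d_𝒜). -/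
open Metric Set

/-- An atlas in `ℝ^{n+1}`: rotations `r_j` and cuboids `r_j(V_j) = Π_i (a_{ij}, b_{ij})`. -/
structure Atlas (n : ℕ) where
  s : ℕ
  s' : ℕ
  hs' : s' ≤ s
  ρ : ℝ
  ρpos : 0 < ρ
  r : Fin s → (EuclideanSpace ℝ (Fin (n+1)) ≃ₗᵢ[ℝ] EuclideanSpace ℝ (Fin (n+1)))
  a : Fin s → Fin (n+1) → ℝ
  b : Fin s → Fin (n+1) → ℝ
  hab : ∀ j i, a j i < b j i

namespace Atlas

variable {n : ℕ} (A : Atlas n)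

/-- The cuboid `V_j` (in the original coordinates). -/
def V (j : Fin A.s) : Set (EuclideanSpace ℝ (Fin (n+1))) :=
  (A.r j) ⁻¹' {x | ∀ i, A.a j i < x i ∧ x i < A.b j i}

/-- The base cuboid `W_j ⊂ ℝ^n`. -/
def W (j : Fin A.s) : Set (EuclideanSpace ℝ (Fin n)) :=
  {x | ∀ i : Fin n, A.a j i.castSucc < x i ∧ x i < A.b j i.castSucc}

/-- First `n` coordinates of a point of `ℝ^{n+1}`. -/
noncomputable def bar {n : ℕ} (x : EuclideanSpace ℝ (Fin (n+1))) : EuclideanSpace ℝ (Fin n) :=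
  (EuclideanSpace.equiv (Fin n) ℝ).symm (fun i => x i.castSucc)

/-- `Ω ∈ C(𝒜)` with local boundary functions `g`: `Ω` is open and nonempty, covered by
the sets `(V_j)_ρ`, in each chart `r_j(Ω ∩ V_j)` is the subgraph of the continuous
function `g j`, `V_j` meets `∂Ω` exactly for `j < s'`, and `a_{Nj}+ρ ≤ g_j ≤ b_{Nj}−ρ`
there (while `g_j = b_{Nj}` for `j ≥ s'`). -/
def IsRep (Ω : Set (EuclideanSpace ℝ (Fin (n+1)))) (g : Fin A.s → EuclideanSpace ℝ (Fin n) → ℝ) : Prop :=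
  IsOpen Ω ∧ Ω.Nonempty ∧ Bornology.IsBounded Ω ∧
  (∀ j, ContinuousOn (g j) (closure (A.W j))) ∧
  (Ω ⊆ ⋃ j, {x ∈ A.V j | A.ρ < infDist x (frontier (A.V j))}) ∧
  (∀ j, (A.r j) '' (Ω ∩ A.V j) =
    {x | bar x ∈ A.W j ∧ A.a j (Fin.last n) < x (Fin.last n) ∧
      x (Fin.last n) < g j (bar x)}) ∧
  (∀ j : Fin A.s, (j : ℕ) < A.s' ↔ (A.V j ∩ frontier Ω).Nonempty) ∧
  (∀ j : Fin A.s, (j : ℕ) < A.s' → ∀ x ∈ closure (A.W j),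
    A.a j (Fin.last n) + A.ρ ≤ g j x ∧ g j x ≤ A.b j (Fin.last n) - A.ρ) ∧
  (∀ j : Fin A.s, A.s' ≤ (j : ℕ) → ∀ x ∈ closure (A.W j), g j x = A.b j (Fin.last n))

/-- The atlas distance: maximum over charts of the sup-norm difference of the
local boundary functions. -/
noncomputable def adist (g₁ g₂ : Fin A.s → EuclideanSpace ℝ (Fin n) → ℝ) : ℝ :=
  ⨆ j : Fin A.s, ⨆ x : closure (A.W j), |g₁ j x - g₂ j x|

end Atlas


section AuxGeneral

lemma euclid_coord_abs_le_norm {m : ℕ} (x : EuclideanSpace ℝ (Fin m)) (i : Fin m) :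
    |x i| ≤ ‖x‖ := by
  rw [EuclideanSpace.norm_eq]
  have h1 : |x i| = Real.sqrt (‖x i‖ ^ 2) := by
    rw [Real.sqrt_sq_eq_abs, Real.norm_eq_abs, abs_abs]
  rw [h1]
  apply Real.sqrt_le_sqrt
  exact Finset.single_le_sum (f := fun i => ‖x i‖ ^ 2) (fun i _ => sq_nonneg _) (Finset.mem_univ i)

lemma euclid_cuboid_bounded {m : ℕ} (a b : Fin m → ℝ) :
    Bornology.IsBounded {x : EuclideanSpace ℝ (Fin m) | ∀ i, a i < x i ∧ x i < b i} := by
  rw [isBounded_iff_forall_norm_le]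
  refine ⟨Real.sqrt (∑ i, (|a i| + |b i|) ^ 2), fun x hx => ?_⟩
  rw [EuclideanSpace.norm_eq]
  apply Real.sqrt_le_sqrt
  apply Finset.sum_le_sum
  intro i _
  have h := hx i
  have hle : ‖x i‖ ≤ |a i| + |b i| := by
    rw [Real.norm_eq_abs, abs_le]
    constructor <;> nlinarith [le_abs_self (b i), neg_abs_le (a i), abs_nonneg (a i), abs_nonneg (b i)]
  nlinarith [norm_nonneg (x i)]

end AuxGeneral

namespace Atlas

variable {n : ℕ} (A : Atlas n)

lemma bar_apply (x : EuclideanSpace ℝ (Fin (n+1))) (i : Fin n) : bar x i = x i.castSucc := rfl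

lemma bar_dist_le (x y : EuclideanSpace ℝ (Fin (n+1))) : dist (bar x) (bar y) ≤ dist x y := by
  rw [EuclideanSpace.dist_eq, EuclideanSpace.dist_eq]
  apply Real.sqrt_le_sqrt
  rw [Fin.sum_univ_castSucc (f := fun i => dist (x i) (y i) ^ 2)]
  have h1 : ∑ i : Fin n, dist (bar x i) (bar y i) ^ 2
      = ∑ i : Fin n, dist (x i.castSucc) (y i.castSucc) ^ 2 := rfl
  rw [h1]
  have := sq_nonneg (dist (x (Fin.last n)) (y (Fin.last n)))
  linarith

lemma W_bounded (j : Fin A.s) : Bornology.IsBounded (A.W j) :=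
  euclid_cuboid_bounded (fun i => A.a j i.castSucc) (fun i => A.b j i.castSucc)

lemma isCompact_closure_W (j : Fin A.s) : IsCompact (closure (A.W j)) :=
  (A.W_bounded j).isCompact_closure

lemma euclid_continuous_apply' {m : ℕ} (i : Fin m) :
    Continuous fun u : EuclideanSpace ℝ (Fin m) => u i := by fun_prop

lemma isOpen_W (j : Fin A.s) : IsOpen (A.W j) := by
  have : A.W j = ⋂ i : Fin n, ((fun x : EuclideanSpace ℝ (Fin n) => x i) ⁻¹'
      Set.Ioo (A.a j i.castSucc) (A.b j i.castSucc)) := by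
    ext x; simp [Atlas.W, Set.mem_iInter, Set.mem_Ioo, forall_and]
  rw [this]
  exact isOpen_iInter_of_finite fun i =>
    (isOpen_Ioo.preimage (euclid_continuous_apply' i))

/-- the center of `W j` -/
noncomputable def Wc (j : Fin A.s) : EuclideanSpace ℝ (Fin n) :=
  WithLp.toLp 2 fun i => (A.a j i.castSucc + A.b j i.castSucc) / 2

lemma Wc_mem (j : Fin A.s) : A.Wc j ∈ A.W j := by
  intro i
  have := A.hab j i.castSucc
  constructor <;> (simp only [Atlas.Wc]; linarith)

lemma abs_le_adist {g₁ g₂ : Fin A.s → EuclideanSpace ℝ (Fin n) → ℝ}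
    (h₁ : ∀ j, ContinuousOn (g₁ j) (closure (A.W j)))
    (h₂ : ∀ j, ContinuousOn (g₂ j) (closure (A.W j)))
    {j : Fin A.s} {x : EuclideanSpace ℝ (Fin n)} (hx : x ∈ closure (A.W j)) :
    |g₁ j x - g₂ j x| ≤ A.adist g₁ g₂ := by
  have hb : BddAbove (range fun z : closure (A.W j) => |g₁ j z - g₂ j z|) := by
    have hK := A.isCompact_closure_W j
    have hcont : ContinuousOn (fun z => |g₁ j z - g₂ j z|) (closure (A.W j)) :=
      ((h₁ j).sub (h₂ j)).abs
    have := hK.bddAbove_image hcont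
    rwa [Set.image_eq_range] at this
  have h1 : |g₁ j x - g₂ j x| ≤ ⨆ z : closure (A.W j), |g₁ j z - g₂ j z| :=
    le_ciSup hb ⟨x, hx⟩
  refine h1.trans ?_
  exact le_ciSup (f := fun j => ⨆ z : closure (A.W j), |g₁ j z - g₂ j z|)
    ((Set.finite_range _).bddAbove) j

lemma adist_le {g₁ g₂ : Fin A.s → EuclideanSpace ℝ (Fin n) → ℝ} {c : ℝ} (hc : 0 ≤ c)
    (h : ∀ j, ∀ x ∈ closure (A.W j), |g₁ j x - g₂ j x| ≤ c) :
    A.adist g₁ g₂ ≤ c :=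
  Real.iSup_le (fun j => Real.iSup_le (fun x => h j x x.2) hc) hc

lemma adist_nonneg (g₁ g₂ : Fin A.s → EuclideanSpace ℝ (Fin n) → ℝ) :
    0 ≤ A.adist g₁ g₂ :=
  Real.iSup_nonneg fun _ => Real.iSup_nonneg fun _ => abs_nonneg _

end Atlas

open Atlas Filter

section AuxMore

lemma euclid_continuous_apply {m : ℕ} (i : Fin m) :
    Continuous fun u : EuclideanSpace ℝ (Fin m) => u i := by
  have h : LipschitzWith 1 (fun u : EuclideanSpace ℝ (Fin m) => u i) := by
    apply LipschitzWith.of_dist_le_mul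
    intro x y
    rw [NNReal.coe_one, one_mul]
    calc dist (x i) (y i) = Real.sqrt (dist (x i) (y i) ^ 2) :=
          (Real.sqrt_sq dist_nonneg).symm
      _ ≤ Real.sqrt (∑ i', dist (x i') (y i') ^ 2) := by
          apply Real.sqrt_le_sqrt
          exact Finset.single_le_sum (f := fun i' => dist (x i') (y i') ^ 2)
            (fun i' _ => sq_nonneg _) (Finset.mem_univ i)
      _ = dist x y := (EuclideanSpace.dist_eq x y).symm
  exact h.continuous

lemma continuous_bar {n : ℕ} : Continuous (Atlas.bar (n := n)) := by
  have h : LipschitzWith 1 (Atlas.bar (n := n)) := by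
    apply LipschitzWith.of_dist_le_mul
    intro x y
    rw [NNReal.coe_one, one_mul]
    exact Atlas.bar_dist_le x y
  exact h.continuous

end AuxMore

namespace Atlas

variable {n : ℕ}

lemma mem_V_iff (A : Atlas n) (j : Fin A.s) (x : EuclideanSpace ℝ (Fin (n+1))) :
    x ∈ A.V j ↔ bar ((A.r j) x) ∈ A.W j ∧ A.a j (Fin.last n) < (A.r j) x (Fin.last n) ∧
      (A.r j) x (Fin.last n) < A.b j (Fin.last n) := by
  constructor
  · intro h
    exact ⟨fun i => h i.castSucc, (h (Fin.last n)).1, (h (Fin.last n)).2⟩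
  · rintro ⟨h1, h2, h3⟩ i
    exact Fin.lastCases ⟨h2, h3⟩ (fun i' => h1 i') i

lemma V_bounded (A : Atlas n) (j : Fin A.s) : Bornology.IsBounded (A.V j) := by
  obtain ⟨C, hC⟩ := isBounded_iff_forall_norm_le.1 (euclid_cuboid_bounded (A.a j) (A.b j))
  rw [isBounded_iff_forall_norm_le]
  refine ⟨C, fun x hx => ?_⟩
  rw [← (A.r j).norm_map x]
  exact hC _ hx

/-- The candidate pieces of the limit domain. -/
def pieces (A : Atlas n) (g : Fin A.s → EuclideanSpace ℝ (Fin n) → ℝ) (k : Fin A.s) :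
    Set (EuclideanSpace ℝ (Fin (n+1))) :=
  {x | bar ((A.r k) x) ∈ A.W k ∧ A.a k (Fin.last n) < (A.r k) x (Fin.last n) ∧
    (A.r k) x (Fin.last n) < g k (bar ((A.r k) x))}

lemma complete_aux (A : Atlas n)
    (Ω : ℕ → Set (EuclideanSpace ℝ (Fin (n+1))))
    (G : ℕ → Fin A.s → EuclideanSpace ℝ (Fin n) → ℝ)
    (hrep : ∀ m, A.IsRep (Ω m) (G m))
    (hcau : ∀ ε > (0:ℝ), ∃ K, ∀ m l, K ≤ m → K ≤ l → A.adist (G m) (G l) < ε) :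
    ∃ Ωl gl, A.IsRep Ωl gl ∧
      Filter.Tendsto (fun m => A.adist (G m) gl) Filter.atTop (nhds 0) := by
  classical
  have hcont : ∀ m j, ContinuousOn (G m j) (closure (A.W j)) := fun m => (hrep m).2.2.2.1
  have hne : ∀ m, (Ω m).Nonempty := fun m => (hrep m).2.1
  have hcover : ∀ m, Ω m ⊆ ⋃ j, {x ∈ A.V j | A.ρ < infDist x (frontier (A.V j))} :=
    fun m => (hrep m).2.2.2.2.1
  have hgraph : ∀ m j, (A.r j) '' (Ω m ∩ A.V j) =
      {x | bar x ∈ A.W j ∧ A.a j (Fin.last n) < x (Fin.last n) ∧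
        x (Fin.last n) < G m j (bar x)} := fun m => (hrep m).2.2.2.2.2.1
  have h8 : ∀ m, ∀ j : Fin A.s, (j : ℕ) < A.s' → ∀ x ∈ closure (A.W j),
      A.a j (Fin.last n) + A.ρ ≤ G m j x ∧ G m j x ≤ A.b j (Fin.last n) - A.ρ :=
    fun m => (hrep m).2.2.2.2.2.2.2.1
  have h9 : ∀ m, ∀ j : Fin A.s, A.s' ≤ (j : ℕ) → ∀ x ∈ closure (A.W j),
      G m j x = A.b j (Fin.last n) := fun m => (hrep m).2.2.2.2.2.2.2.2
  -- pointwise Cauchy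
  have hCpt : ∀ j, ∀ x ∈ closure (A.W j), CauchySeq (fun m => G m j x) := by
    intro j x hx
    rw [Metric.cauchySeq_iff]
    intro ε hε
    obtain ⟨K, hK⟩ := hcau ε hε
    refine ⟨K, fun m hm l hl => ?_⟩
    rw [Real.dist_eq]
    exact lt_of_le_of_lt (A.abs_le_adist (hcont m) (hcont l) hx) (hK m l hm hl)
  set gl : Fin A.s → EuclideanSpace ℝ (Fin n) → ℝ :=
    fun j x => limUnder atTop (fun m => G m j x) with hgl
  have htend : ∀ j, ∀ x ∈ closure (A.W j),
      Tendsto (fun m => G m j x) atTop (nhds (gl j x)) :=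
    fun j x hx => (hCpt j x hx).tendsto_limUnder
  -- uniform control
  have huni : ∀ ε > (0:ℝ), ∃ K, ∀ m, K ≤ m → ∀ j, ∀ x ∈ closure (A.W j),
      |G m j x - gl j x| ≤ ε := by
    intro ε hε
    obtain ⟨K, hK⟩ := hcau ε hε
    refine ⟨K, fun m hm j x hx => ?_⟩
    have h1 : Tendsto (fun l => |G m j x - G l j x|) atTop (nhds |G m j x - gl j x|) :=
      (tendsto_const_nhds.sub (htend j x hx)).abs
    apply le_of_tendsto h1
    filter_upwards [eventually_ge_atTop K] with l hl
    exact (A.abs_le_adist (hcont m) (hcont l) hx).trans (hK m l hm hl).le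
  have htd : Tendsto (fun m => A.adist (G m) gl) atTop (nhds 0) := by
    rw [Metric.tendsto_atTop]
    intro ε hε
    obtain ⟨K, hK⟩ := huni (ε/2) (by linarith)
    refine ⟨K, fun m hm => ?_⟩
    rw [Real.dist_eq, sub_zero, abs_of_nonneg (A.adist_nonneg _ _)]
    have : A.adist (G m) gl ≤ ε/2 :=
      A.adist_le (by linarith) (fun j x hx => hK m hm j x hx)
    linarith
  have hglcont : ∀ j, ContinuousOn (gl j) (closure (A.W j)) := by
    intro j
    have hU : TendstoUniformlyOn (fun m x => G m j x) (gl j) atTop (closure (A.W j)) := by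
      rw [tendstoUniformlyOn_iff]
      intro ε hε
      obtain ⟨K, hK⟩ := huni (ε/2) (by linarith)
      filter_upwards [eventually_ge_atTop K] with m hm x hx
      have := hK m hm j x hx
      rw [Real.dist_eq]
      rw [abs_sub_comm] at this
      linarith
    exact hU.continuousOn (Filter.Frequently.of_forall fun m => hcont m j)
  have h8l : ∀ j : Fin A.s, (j : ℕ) < A.s' → ∀ x ∈ closure (A.W j),
      A.a j (Fin.last n) + A.ρ ≤ gl j x ∧ gl j x ≤ A.b j (Fin.last n) - A.ρ := by
    intro j hj x hx
    constructor
    · exact ge_of_tendsto (htend j x hx)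
        (Filter.Eventually.of_forall fun m => (h8 m j hj x hx).1)
    · exact le_of_tendsto (htend j x hx)
        (Filter.Eventually.of_forall fun m => (h8 m j hj x hx).2)
  have h9l : ∀ j : Fin A.s, A.s' ≤ (j : ℕ) → ∀ x ∈ closure (A.W j),
      gl j x = A.b j (Fin.last n) := by
    intro j hj x hx
    have h1 : Tendsto (fun m => G m j x) atTop (nhds (A.b j (Fin.last n))) := by
      have : (fun m => G m j x) = fun _ => A.b j (Fin.last n) :=
        funext fun m => h9 m j hj x hx
      rw [this]; exact tendsto_const_nhds
    exact tendsto_nhds_unique (htend j x hx) h1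
  -- membership of pieces in Ω m eventually
  have hmemΩ : ∀ k x, x ∈ A.pieces gl k → ∀ᶠ m in atTop, x ∈ Ω m := by
    rintro k x ⟨hW, ha, hlt⟩
    set c := gl k (bar ((A.r k) x)) - (A.r k) x (Fin.last n) with hc
    have hc0 : 0 < c := by simp only [hc]; linarith
    obtain ⟨K, hK⟩ := huni (c/2) (by linarith)
    filter_upwards [eventually_ge_atTop K] with m hm
    have hWc : bar ((A.r k) x) ∈ closure (A.W k) := subset_closure hW
    have h1 := hK m hm k _ hWc
    have h2 : (A.r k) x (Fin.last n) < G m k (bar ((A.r k) x)) := by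
      have := abs_le.1 h1
      simp only [hc] at *
      linarith [this.2]
    have h3 : (A.r k) x ∈ (A.r k) '' (Ω m ∩ A.V k) := by
      rw [hgraph m k]; exact ⟨hW, ha, h2⟩
    obtain ⟨y, hy, hyx⟩ := h3
    rw [← (A.r k).injective hyx]
    exact hy.1
  -- the limit set
  refine ⟨⋃ k, A.pieces gl k, gl, ?_, htd⟩
  have hsub_cover : (⋃ k, A.pieces gl k) ⊆
      ⋃ j, {x ∈ A.V j | A.ρ < infDist x (frontier (A.V j))} := by
    intro x hx
    obtain ⟨k, hk⟩ := mem_iUnion.1 hx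
    obtain ⟨m, hmΩ⟩ := (hmemΩ k x hk).exists
    exact hcover m hmΩ
  have hopenl : IsOpen (⋃ k, A.pieces gl k) := by
    apply isOpen_iUnion
    intro k
    rw [isOpen_iff_mem_nhds]
    rintro x ⟨hW, ha, hlt⟩
    have hrc : Continuous fun y : EuclideanSpace ℝ (Fin (n+1)) => bar ((A.r k) y) :=
      continuous_bar.comp (A.r k).continuous
    have hNc : Continuous fun y : EuclideanSpace ℝ (Fin (n+1)) => (A.r k) y (Fin.last n) :=
      (euclid_continuous_apply (Fin.last n)).comp (A.r k).continuous
    have hglAt : ContinuousAt (gl k) (bar ((A.r k) x)) := by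
      apply (hglcont k).continuousAt
      exact mem_nhds_iff.2 ⟨A.W k, subset_closure, A.isOpen_W k, hW⟩
    have hcomp : ContinuousAt (fun y => gl k (bar ((A.r k) y))) x :=
      ContinuousAt.comp (g := gl k) (f := fun y => bar ((A.r k) y)) hglAt hrc.continuousAt
    have hfc : ContinuousAt (fun y => gl k (bar ((A.r k) y)) - (A.r k) y (Fin.last n)) x :=
      hcomp.sub hNc.continuousAt
    have e1 : ∀ᶠ y in nhds x, bar ((A.r k) y) ∈ A.W k :=
      hrc.continuousAt.preimage_mem_nhds ((A.isOpen_W k).mem_nhds hW)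
    have e2 : ∀ᶠ y in nhds x, A.a k (Fin.last n) < (A.r k) y (Fin.last n) :=
      hNc.continuousAt.eventually_const_lt ha
    have e3 : ∀ᶠ y in nhds x,
        (0:ℝ) < gl k (bar ((A.r k) y)) - (A.r k) y (Fin.last n) :=
      Filter.Tendsto.eventually_const_lt
        (show (0:ℝ) < gl k (bar ((A.r k) x)) - (A.r k) x (Fin.last n) by linarith) hfc
    have : ∀ᶠ y in nhds x, y ∈ A.pieces gl k := by
      filter_upwards [e1, e2, e3] with y hy1 hy2 hy3
      exact ⟨hy1, hy2, by linarith⟩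
    simpa only [Filter.Eventually, Set.setOf_mem_eq] using this
  have hs1 : 0 < A.s := by
    obtain ⟨x, hx⟩ := hne 0
    obtain ⟨j, _⟩ := mem_iUnion.1 (hcover 0 hx)
    exact j.pos
  have hbddl : Bornology.IsBounded (⋃ k, A.pieces gl k) := by
    apply Bornology.IsBounded.subset (Bornology.isBounded_iUnion.2 (fun j => A.V_bounded j))
    intro x hx
    obtain ⟨j, hj, _⟩ := mem_iUnion.1 (hsub_cover hx)
    exact mem_iUnion.2 ⟨j, hj⟩
  have hnel : (⋃ k, A.pieces gl k).Nonempty := by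
    set j0 : Fin A.s := ⟨0, hs1⟩ with hj0
    have hWc : A.Wc j0 ∈ closure (A.W j0) := subset_closure (A.Wc_mem j0)
    have hgt : A.a j0 (Fin.last n) < gl j0 (A.Wc j0) := by
      rcases lt_or_ge (0:ℕ) A.s' with hs' | hs'
      · have := (h8l j0 hs' _ hWc).1
        have := A.ρpos
        linarith
      · have h0 : A.s' ≤ ((j0 : ℕ)) := by omega
        rw [h9l j0 h0 _ hWc]
        exact A.hab j0 (Fin.last n)
    set t := (A.a j0 (Fin.last n) + gl j0 (A.Wc j0)) / 2 with ht
    set p : EuclideanSpace ℝ (Fin (n+1)) := (A.r j0).symm (WithLp.toLp 2 (Fin.snoc (A.Wc j0).ofLp t)) with hp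
    refine ⟨p, mem_iUnion.2 ⟨j0, ?_⟩⟩
    have hrp : (A.r j0) p = WithLp.toLp 2 (Fin.snoc (A.Wc j0).ofLp t) := (A.r j0).apply_symm_apply _
    have hbar : bar ((A.r j0) p) = A.Wc j0 := by
      ext i
      rw [bar_apply, hrp]
      exact Fin.snoc_castSucc (α := fun _ => ℝ) _ _ i
    refine ⟨?_, ?_, ?_⟩
    · rw [hbar]; exact A.Wc_mem j0
    · rw [hrp]
      have : (WithLp.toLp 2 (Fin.snoc (A.Wc j0).ofLp t) : EuclideanSpace ℝ (Fin (n+1))) (Fin.last n) = t :=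
        Fin.snoc_last (α := fun _ => ℝ) _ _
      rw [this]; simp only [ht]; linarith
    · rw [hbar, hrp]
      have : (WithLp.toLp 2 (Fin.snoc (A.Wc j0).ofLp t) : EuclideanSpace ℝ (Fin (n+1))) (Fin.last n) = t :=
        Fin.snoc_last (α := fun _ => ℝ) _ _
      rw [this]; simp only [ht]; linarith
  -- the graph condition for the limit
  have h6 : ∀ j, (A.r j) '' ((⋃ k, A.pieces gl k) ∩ A.V j) =
      {x | bar x ∈ A.W j ∧ A.a j (Fin.last n) < x (Fin.last n) ∧
        x (Fin.last n) < gl j (bar x)} := by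
    intro j
    apply Set.Subset.antisymm
    · rintro y ⟨x, ⟨hxΩ, hxV⟩, rfl⟩
      obtain ⟨hbW, hbA, hbB⟩ := (A.mem_V_iff j x).1 hxV
      refine ⟨hbW, hbA, ?_⟩
      by_cases hj : A.s' ≤ (j : ℕ)
      · rw [h9l j hj _ (subset_closure hbW)]
        exact hbB
      push_neg at hj
      have hxcl : bar ((A.r j) x) ∈ closure (A.W j) := subset_closure hbW
      obtain ⟨k, hk⟩ := mem_iUnion.1 hxΩ
      have hmem_ev := hmemΩ k x hk
      obtain ⟨hkW, hkA, hkL⟩ := hk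
      have hle : (A.r j) x (Fin.last n) ≤ gl j (bar ((A.r j) x)) := by
        apply ge_of_tendsto (htend j _ hxcl)
        filter_upwards [hmem_ev] with m hm
        have hmm : (A.r j) x ∈ (A.r j) '' (Ω m ∩ A.V j) := ⟨x, ⟨hm, hxV⟩, rfl⟩
        rw [hgraph m j] at hmm
        exact hmm.2.2.le
      rcases hle.lt_or_eq with h | heq
      · exact h
      exfalso
      set c := gl k (bar ((A.r k) x)) - (A.r k) x (Fin.last n) with hcdef
      have hc0 : 0 < c := by rw [hcdef]; linarith
      have hglAt : ContinuousAt (gl k) (bar ((A.r k) x)) :=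
        (hglcont k).continuousAt (mem_nhds_iff.2 ⟨A.W k, subset_closure, A.isOpen_W k, hkW⟩)
      have hev : ∀ᶠ z in nhds (bar ((A.r k) x)),
          gl k (bar ((A.r k) x)) - c/4 < gl k z ∧ z ∈ A.W k :=
        (Filter.Tendsto.eventually_const_lt (by linarith) hglAt).and
          ((A.isOpen_W k).eventually_mem hkW)
      obtain ⟨δ, hδ0, hδ⟩ := Metric.eventually_nhds_iff.1 hev
      have hra : 0 < (A.r k) x (Fin.last n) - A.a k (Fin.last n) := by linarith
      obtain ⟨ε, hε0, hεδ, hεc, hερ, hεa⟩ :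
          ∃ ε : ℝ, 0 < ε ∧ ε < δ ∧ ε < c/4 ∧ ε < A.ρ ∧
            ε < (A.r k) x (Fin.last n) - A.a k (Fin.last n) := by
        have hρ := A.ρpos
        refine ⟨min (min (δ/2) (c/8)) (min (A.ρ/2)
          (((A.r k) x (Fin.last n) - A.a k (Fin.last n))/2)), ?_, ?_, ?_, ?_, ?_⟩
        · exact lt_min (lt_min (by linarith) (by linarith))
            (lt_min (by linarith) (by linarith))
        · exact lt_of_le_of_lt ((min_le_left _ _).trans (min_le_left _ _)) (by linarith)
        · exact lt_of_le_of_lt ((min_le_left _ _).trans (min_le_right _ _)) (by linarith)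
        · exact lt_of_le_of_lt ((min_le_right _ _).trans (min_le_left _ _)) (by linarith)
        · exact lt_of_le_of_lt ((min_le_right _ _).trans (min_le_right _ _)) (by linarith)
      set w : EuclideanSpace ℝ (Fin (n+1)) :=
        (A.r j).symm (EuclideanSpace.single (Fin.last n) ε) with hwdef
      set x' := x + w with hx'def
      have hnw : ‖w‖ = ε := by
        rw [hwdef, (A.r j).symm.norm_map, EuclideanSpace.norm_single, Real.norm_eq_abs,
          abs_of_pos hε0]
      have hrjx' : (A.r j) x' = (A.r j) x + EuclideanSpace.single (Fin.last n) ε := by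
        rw [hx'def, map_add, hwdef, (A.r j).apply_symm_apply]
      have hbar_j : bar ((A.r j) x') = bar ((A.r j) x) := by
        ext i
        rw [bar_apply, bar_apply, hrjx', PiLp.add_apply, EuclideanSpace.single_apply,
          if_neg (Fin.castSucc_lt_last i).ne, add_zero]
      have hlast_j : (A.r j) x' (Fin.last n) = (A.r j) x (Fin.last n) + ε := by
        rw [hrjx', PiLp.add_apply, EuclideanSpace.single_apply, if_pos rfl]
      have hrkx' : (A.r k) x' = (A.r k) x + (A.r k) w := by
        rw [hx'def, map_add]
      have hdist_k : dist (bar ((A.r k) x')) (bar ((A.r k) x)) ≤ ε := by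
        refine (bar_dist_le _ _).trans ?_
        rw [dist_eq_norm, hrkx', add_sub_cancel_left, (A.r k).norm_map]
        exact hnw.le
      have hbarW := hδ (show dist (bar ((A.r k) x')) (bar ((A.r k) x)) < δ by linarith)
      have hlast_k : |(A.r k) x' (Fin.last n) - (A.r k) x (Fin.last n)| ≤ ε := by
        rw [hrkx', PiLp.add_apply, add_sub_cancel_left]
        calc |(A.r k) w (Fin.last n)| ≤ ‖(A.r k) w‖ := euclid_coord_abs_le_norm _ _
          _ = ε := by rw [(A.r k).norm_map]; exact hnw
      obtain ⟨K1, hK1⟩ := huni (c/4) (by linarith)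
      have ev2 : ∀ᶠ m in atTop, G m j (bar ((A.r j) x)) < (A.r j) x (Fin.last n) + ε :=
        Filter.Tendsto.eventually_lt_const
          (show gl j (bar ((A.r j) x)) < (A.r j) x (Fin.last n) + ε by
            rw [← heq]; linarith) (htend j _ hxcl)
      obtain ⟨m, hm1, hm2⟩ := ((eventually_ge_atTop K1).and ev2).exists
      have hb2 := abs_le.1 (hK1 m hm1 k _ (subset_closure hbarW.2))
      have h3 := abs_le.1 hlast_k
      have hGk : (A.r k) x' (Fin.last n) < G m k (bar ((A.r k) x')) := by
        have hW2 := hbarW.1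
        linarith [hb2.1, h3.2]
      have hx'Ωm : x' ∈ Ω m := by
        have hmm : (A.r k) x' ∈ (A.r k) '' (Ω m ∩ A.V k) := by
          rw [hgraph m k]
          refine ⟨hbarW.2, ?_, hGk⟩
          linarith [h3.1]
        obtain ⟨z, hz, hzx⟩ := hmm
        rw [← (A.r k).injective hzx]
        exact hz.1
      have hx'Vj : x' ∈ A.V j := by
        rw [A.mem_V_iff]
        refine ⟨by rw [hbar_j]; exact hbW, ?_, ?_⟩
        · rw [hlast_j]; linarith
        · rw [hlast_j, heq]
          have hub := (h8l j hj _ hxcl).2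
          linarith
      have hgr : (A.r j) x' ∈ (A.r j) '' (Ω m ∩ A.V j) := ⟨x', ⟨hx'Ωm, hx'Vj⟩, rfl⟩
      rw [hgraph m j] at hgr
      have hfin : (A.r j) x' (Fin.last n) < G m j (bar ((A.r j) x')) := hgr.2.2
      rw [hlast_j, hbar_j] at hfin
      linarith
    · rintro y ⟨hbW, hbA, hbB⟩
      refine ⟨(A.r j).symm y, ⟨?_, ?_⟩, (A.r j).apply_symm_apply y⟩
      · refine mem_iUnion.2 ⟨j, ?_, ?_, ?_⟩ <;> rw [(A.r j).apply_symm_apply y]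
        exacts [hbW, hbA, hbB]
      · rw [A.mem_V_iff, (A.r j).apply_symm_apply y]
        refine ⟨hbW, hbA, ?_⟩
        by_cases hj : A.s' ≤ (j:ℕ)
        · rw [h9l j hj _ (subset_closure hbW)] at hbB; exact hbB
        · push_neg at hj
          have h1 := (h8l j hj _ (subset_closure hbW)).2
          have h2 := A.ρpos
          linarith
  have h7 : ∀ j : Fin A.s, (j : ℕ) < A.s' ↔
      (A.V j ∩ frontier (⋃ k, A.pieces gl k)).Nonempty := by
    intro j
    constructor
    · intro hj
      set xb := A.Wc j with hxb
      have hxbW : xb ∈ A.W j := A.Wc_mem j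
      have hxbc : xb ∈ closure (A.W j) := subset_closure hxbW
      set t := gl j xb with htdef
      obtain ⟨ht1, ht2⟩ := h8l j hj _ hxbc
      set p : EuclideanSpace ℝ (Fin (n+1)) := (A.r j).symm (WithLp.toLp 2 (Fin.snoc xb.ofLp t)) with hpdef
      have hrp : (A.r j) p = WithLp.toLp 2 (Fin.snoc xb.ofLp t) := (A.r j).apply_symm_apply _
      have hbarp : bar ((A.r j) p) = xb := by
        ext i; rw [bar_apply, hrp]; exact Fin.snoc_castSucc (α := fun _ => ℝ) _ _ i
      have hlastp : (A.r j) p (Fin.last n) = t := by rw [hrp]; exact Fin.snoc_last (α := fun _ => ℝ) _ _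
      have hρ := A.ρpos
      have hpV : p ∈ A.V j := by
        rw [A.mem_V_iff, hbarp, hlastp]
        exact ⟨hxbW, by linarith, by linarith⟩
      have hpnot : p ∉ ⋃ k, A.pieces gl k := by
        intro hp
        have hmm : (A.r j) p ∈ (A.r j) '' ((⋃ k, A.pieces gl k) ∩ A.V j) := ⟨p, ⟨hp, hpV⟩, rfl⟩
        rw [h6 j] at hmm
        have h2 := hmm.2.2
        rw [hbarp, hlastp, ← htdef] at h2
        exact lt_irrefl _ h2
      have hpcl : p ∈ closure (⋃ k, A.pieces gl k) := by
        set w : EuclideanSpace ℝ (Fin (n+1)) :=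
          (A.r j).symm (EuclideanSpace.single (Fin.last n) 1) with hwdef
        have hq : ∀ i : ℕ, p - (A.ρ/((i:ℝ)+2)) • w ∈ ⋃ k, A.pieces gl k := by
          intro i
          have hci0 : 0 < A.ρ/((i:ℝ)+2) := by positivity
          have hci : A.ρ/((i:ℝ)+2) < A.ρ := by
            rw [div_lt_iff₀ (by positivity)]
            nlinarith [A.ρpos, (Nat.cast_nonneg i : (0:ℝ) ≤ i)]
          have hr : (A.r j) (p - (A.ρ/((i:ℝ)+2)) • w) =
              WithLp.toLp 2 (Fin.snoc xb.ofLp t) - (A.ρ/((i:ℝ)+2)) • EuclideanSpace.single (Fin.last n) 1 := by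
            rw [map_sub, map_smul, hrp, hwdef,
              LinearIsometryEquiv.apply_symm_apply (A.r j) (EuclideanSpace.single (Fin.last n) 1)]
          have hbar_i : bar ((A.r j) (p - (A.ρ/((i:ℝ)+2)) • w)) = xb := by
            ext i'
            rw [bar_apply, hr, PiLp.sub_apply, PiLp.smul_apply, EuclideanSpace.single_apply,
              if_neg (Fin.castSucc_lt_last i').ne, smul_zero, sub_zero]
            exact Fin.snoc_castSucc (α := fun _ => ℝ) _ _ i'
          have hlast_i : (A.r j) (p - (A.ρ/((i:ℝ)+2)) • w) (Fin.last n)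
              = t - A.ρ/((i:ℝ)+2) := by
            rw [hr, PiLp.sub_apply, PiLp.smul_apply, EuclideanSpace.single_apply, if_pos rfl,
              smul_eq_mul, mul_one]
            congr 1
            exact Fin.snoc_last (α := fun _ => ℝ) _ _
          refine mem_iUnion.2 ⟨j, ?_, ?_, ?_⟩
          · rw [hbar_i]; exact hxbW
          · rw [hlast_i]; linarith
          · rw [hlast_i, hbar_i, ← htdef]; linarith
        have hten : Tendsto (fun i : ℕ => p - (A.ρ/((i:ℝ)+2)) • w) atTop (nhds p) := by
          have h0 : Tendsto (fun i : ℕ => A.ρ/((i:ℝ)+2)) atTop (nhds 0) := by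
            apply Filter.Tendsto.div_atTop tendsto_const_nhds
            exact tendsto_atTop_add_const_right atTop 2 tendsto_natCast_atTop_atTop
          have h1 : Tendsto (fun i : ℕ => (A.ρ/((i:ℝ)+2)) • w) atTop (nhds ((0:ℝ) • w)) :=
            h0.smul_const w
          rw [zero_smul] at h1
          have h2 : Tendsto (fun i : ℕ => p - (A.ρ/((i:ℝ)+2)) • w) atTop (nhds (p - 0)) :=
            Filter.Tendsto.sub tendsto_const_nhds h1
          simpa using h2
        exact mem_closure_of_tendsto hten (Filter.Eventually.of_forall hq)
      refine ⟨p, hpV, ?_⟩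
      rw [hopenl.frontier_eq]
      exact ⟨hpcl, hpnot⟩
    · rintro ⟨x, hxV, hxF⟩
      by_contra hj
      push_neg at hj
      have hxΩ : x ∈ ⋃ k, A.pieces gl k := by
        obtain ⟨hbW, hbA, hbB⟩ := (A.mem_V_iff j x).1 hxV
        refine mem_iUnion.2 ⟨j, hbW, hbA, ?_⟩
        rw [h9l j hj _ (subset_closure hbW)]
        exact hbB
      rw [hopenl.frontier_eq] at hxF
      exact hxF.2 hxΩ
  exact ⟨hopenl, hnel, hbddl, hglcont, hsub_cover, h6, h7, h8l, h9l⟩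

end Atlas


/-- `Ω ∈ C_M^{ω(·)}(𝒜)`: a representation whose boundary functions all satisfy
`|g_j(x̄) − g_j(ȳ)| ≤ M ω(|x̄ − ȳ|)`. -/
def Atlas.IsRepMod {n : ℕ} (A : Atlas n) (ω : ℝ → ℝ) (M : ℝ)
    (Ω : Set (EuclideanSpace ℝ (Fin (n+1))))
    (g : Fin A.s → EuclideanSpace ℝ (Fin n) → ℝ) : Prop :=
  A.IsRep Ω g ∧ ∀ j, ∀ x ∈ closure (A.W j), ∀ y ∈ closure (A.W j),
    |g j x - g j y| ≤ M * ω (dist x y)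

/-- `(C(𝒜), d_𝒜)` is complete, and for any admissible modulus `ω` and `M > 0`
the class `C_M^{ω(·)}(𝒜)` is (sequentially) compact in `(C(𝒜), d_𝒜)`. -/
theorem atlasDist_complete_and_compact {n : ℕ} (A : Atlas n)
    (ω : ℝ → ℝ) (k M : ℝ) (hk : 0 < k) (hM : 0 < M)
    (hωc : ContinuousOn ω (Set.Ici 0)) (hωm : MonotoneOn ω (Set.Ici 0))
    (hω0 : ω 0 = 0) (hωk : ∀ t ∈ Set.Icc (0:ℝ) 1, k * t ≤ ω t) :
    (∀ (Ω : ℕ → Set (EuclideanSpace ℝ (Fin (n+1))))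
      (G : ℕ → Fin A.s → EuclideanSpace ℝ (Fin n) → ℝ),
      (∀ m, A.IsRep (Ω m) (G m)) →
      (∀ ε > (0:ℝ), ∃ K, ∀ m l, K ≤ m → K ≤ l → A.adist (G m) (G l) < ε) →
      ∃ Ωl gl, A.IsRep Ωl gl ∧
        Tendsto (fun m => A.adist (G m) gl) atTop (nhds 0)) ∧
    (∀ (Ω : ℕ → Set (EuclideanSpace ℝ (Fin (n+1))))
      (G : ℕ → Fin A.s → EuclideanSpace ℝ (Fin n) → ℝ),
      (∀ m, A.IsRepMod ω M (Ω m) (G m)) →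
      ∃ φ : ℕ → ℕ, StrictMono φ ∧ ∃ Ωl gl, A.IsRepMod ω M Ωl gl ∧
        Tendsto (fun m => A.adist (G (φ m)) gl) atTop (nhds 0)) := by
  constructor
  · intro Ω G hrep hcau
    exact A.complete_aux Ω G hrep hcau
  · intro Ω G hrep
    classical
    haveI hfc : FirstCountableTopology
        (∀ j : Fin A.s, BoundedContinuousFunction (closure (A.W j)) ℝ) := by
      set_option synthInstance.maxHeartbeats 1000000 in infer_instance
    haveI hcs : ∀ j : Fin A.s, CompactSpace (closure (A.W j)) :=
      fun j => isCompact_iff_compactSpace.mp (A.isCompact_closure_W j)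
    have hcont : ∀ m j, ContinuousOn (G m j) (closure (A.W j)) :=
      fun m => ((hrep m).1).2.2.2.1
    set F : ℕ → ∀ j : Fin A.s, (BoundedContinuousFunction (closure (A.W j)) ℝ) :=
      fun m j => BoundedContinuousFunction.mkOfCompact
        ⟨(closure (A.W j)).restrict (G m j), (hcont m j).restrict⟩ with hF
    have hFcoe : ∀ m j (x : closure (A.W j)), F m j x = G m j ↑x := fun _ _ _ => rfl
    set T : ∀ j : Fin A.s, Set (BoundedContinuousFunction (closure (A.W j)) ℝ) := fun j =>
      {f | (∀ x y : closure (A.W j), |f x - f y| ≤ M * ω (dist x y)) ∧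
        ∀ x, f x ∈ Set.Icc (A.a j (Fin.last n)) (A.b j (Fin.last n))} with hT
    have hTcompact : ∀ j, IsCompact (T j) := by
      intro j
      apply BoundedContinuousFunction.arzela_ascoli₂
        (Set.Icc (A.a j (Fin.last n)) (A.b j (Fin.last n))) isCompact_Icc
      · -- closed
        have heq : T j = (⋂ x : closure (A.W j), ⋂ y : closure (A.W j),
            {f : BoundedContinuousFunction (closure (A.W j)) ℝ | |f x - f y| ≤ M * ω (dist x y)}) ∩
            (⋂ x : closure (A.W j), {f : BoundedContinuousFunction (closure (A.W j)) ℝ |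
              f x ∈ Set.Icc (A.a j (Fin.last n)) (A.b j (Fin.last n))}) := by
          ext f
          simp only [hT, Set.mem_setOf_eq, Set.mem_inter_iff, Set.mem_iInter]
        rw [heq]
        apply IsClosed.inter
        · refine isClosed_iInter fun x => isClosed_iInter fun y => ?_
          exact isClosed_le
            (((continuous_eval_const x).sub
              (continuous_eval_const y)).abs)
            continuous_const
        · refine isClosed_iInter fun x => ?_
          exact isClosed_Icc.preimage (continuous_eval_const x)
      · exact fun f x hf => hf.2 x
      · -- equicontinuity
        intro x0
        rw [equicontinuousAt_iff]
        intro ε hε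
        have hcw : Tendsto ω (nhdsWithin 0 (Set.Ici 0)) (nhds 0) := by
          have h := hωc 0 Set.self_mem_Ici
          rw [ContinuousWithinAt, hω0] at h
          exact h
        have hev : ∀ᶠ t in nhdsWithin 0 (Set.Ici 0), ω t < ε/(2*M) :=
          hcw.eventually_lt_const (by positivity)
        obtain ⟨δ, hδ0, hδ⟩ := mem_nhdsWithin_iff.1 hev
        refine ⟨δ, hδ0, fun x hx f => ?_⟩
        have h2 : ω (dist x0 x) < ε/(2*M) := by
          apply hδ
          constructor
          · rw [mem_ball, Real.dist_eq, sub_zero, abs_of_nonneg dist_nonneg, dist_comm]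
            exact hx
          · exact dist_nonneg
        calc dist ((f : BoundedContinuousFunction (closure (A.W j)) ℝ) x0) ((f : BoundedContinuousFunction (closure (A.W j)) ℝ) x)
            ≤ M * ω (dist x0 x) := by rw [Real.dist_eq]; exact f.2.1 x0 x
          _ < M * (ε/(2*M)) := mul_lt_mul_of_pos_left h2 hM
          _ < ε := by
              have hMε : M * (ε/(2*M)) = ε/2 := by field_simp
              rw [hMε]; linarith
    have hFmem : ∀ m, F m ∈ Set.univ.pi T := by
      intro m
      rw [Set.mem_univ_pi]
      intro j
      constructor
      · intro x y
        have := (hrep m).2 j x.1 x.2 y.1 y.2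
        rw [hFcoe, hFcoe, Subtype.dist_eq]
        exact this
      · intro x
        rw [hFcoe]
        rcases lt_or_ge ((j : ℕ)) A.s' with hj | hj
        · have h8 := ((hrep m).1).2.2.2.2.2.2.2.1 j hj x.1 x.2
          have := A.ρpos
          exact ⟨by linarith [h8.1], by linarith [h8.2]⟩
        · have h9 := ((hrep m).1).2.2.2.2.2.2.2.2 j hj x.1 x.2
          rw [h9]
          exact ⟨(A.hab j (Fin.last n)).le, le_rfl⟩
    obtain ⟨Fl, _, φ, hφ, hFtend⟩ :=
      (isCompact_univ_pi hTcompact).tendsto_subseq hFmem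
    have hcau : ∀ ε > (0:ℝ), ∃ K, ∀ m l, K ≤ m → K ≤ l →
        A.adist (G (φ m)) (G (φ l)) < ε := by
      intro ε hε
      have hc : ∀ j : Fin A.s, ∃ Kj, ∀ m l, Kj ≤ m → Kj ≤ l →
          dist (F (φ m) j) (F (φ l) j) < ε/2 := by
        intro j
        have ht := (tendsto_pi_nhds.1 hFtend) j
        have hcs := ht.cauchySeq
        rw [Metric.cauchySeq_iff] at hcs
        obtain ⟨Kj, hKj⟩ := hcs (ε/2) (by linarith)
        exact ⟨Kj, fun m l hm hl => hKj m hm l hl⟩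
      choose Ks hKs using hc
      refine ⟨Finset.univ.sup Ks, fun m l hm hl => ?_⟩
      have hle : A.adist (G (φ m)) (G (φ l)) ≤ ε/2 := by
        apply A.adist_le (by linarith)
        intro j x hx
        have h1 : |G (φ m) j x - G (φ l) j x|
            = dist (F (φ m) j ⟨x, hx⟩) (F (φ l) j ⟨x, hx⟩) := by
          rw [Real.dist_eq]; rfl
        rw [h1]
        refine (BoundedContinuousFunction.dist_coe_le_dist _).trans ?_
        exact (hKs j m l ((Finset.le_sup (Finset.mem_univ j)).trans hm)
          ((Finset.le_sup (Finset.mem_univ j)).trans hl)).le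
      linarith
    obtain ⟨Ωl, gl, hrepl, htendl⟩ := A.complete_aux (fun m => Ω (φ m)) (fun m => G (φ m))
      (fun m => (hrep (φ m)).1) hcau
    have hcontl : ∀ j, ContinuousOn (gl j) (closure (A.W j)) := hrepl.2.2.2.1
    have hmod : ∀ j, ∀ x ∈ closure (A.W j), ∀ y ∈ closure (A.W j),
        |gl j x - gl j y| ≤ M * ω (dist x y) := by
      intro j x hx y hy
      have key : ∀ m, |gl j x - gl j y| ≤ M * ω (dist x y) + 2 * A.adist (G (φ m)) gl := by
        intro m
        have e1 := A.abs_le_adist (hcont (φ m)) hcontl hx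
        have e2 := A.abs_le_adist (hcont (φ m)) hcontl hy
        have e3 := (hrep (φ m)).2 j x hx y hy
        have t1 : |gl j x - gl j y| ≤ |gl j x - G (φ m) j x| + |G (φ m) j x - gl j y| :=
          abs_sub_le _ _ _
        have t2 : |G (φ m) j x - gl j y| ≤ |G (φ m) j x - G (φ m) j y| + |G (φ m) j y - gl j y| :=
          abs_sub_le _ _ _
        have e1' : |gl j x - G (φ m) j x| = |G (φ m) j x - gl j x| := abs_sub_comm _ _
        linarith
      have hlim : Tendsto (fun m => M * ω (dist x y) + 2 * A.adist (G (φ m)) gl) atTop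
          (nhds (M * ω (dist x y) + 2 * 0)) :=
        tendsto_const_nhds.add (htendl.const_mul 2)
      have := ge_of_tendsto hlim (Filter.Eventually.of_forall key)
      rw [mul_zero, add_zero] at this
      exact this
    exact ⟨φ, hφ, Ωl, gl, ⟨hrepl, hmod⟩, htendl⟩
end
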